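/- arXiv:1102.0301 — 4 statements merged into one kernel-verified Lean document; each statement's English description precedes it below -/
import Mathlib

section
/- Let $1 < \eta < 2$ and $\theta > 0$, and let $Y$ be a real-valued random variable with $E[|Y|^{\eta}] < \infty$. Then $E[(e^{\theta Y} - 1 - \theta Y)\mathbf{1}(Y \le 1/\theta)] \le \theta^{\eta} E[|Y|^{\eta}] \left( \frac{1}{2-\eta} + \frac{1}{\eta - 1} + e \right)$. -/
open MeasureTheory ProbabilityTheory Filter
open scoped ENNReal

lemma key_pointwise (η : ℝ) (hη1 : 1 < η) (hη2 : η < 2) (t : ℝ) (ht : t ≤ 1) :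
    Real.exp t - 1 - t ≤ 2 * |t| ^ η := by
  have hηnn : (0:ℝ) ≤ |t| ^ η := Real.rpow_nonneg (abs_nonneg t) η
  rcases le_or_gt (-1) t with h | h
  · have habs : |t| ≤ 1 := abs_le.2 ⟨h, ht⟩
    rcases eq_or_ne t 0 with rfl | ht0
    · simpa using Real.rpow_nonneg le_rfl η
    · have hb := Real.exp_bound habs (n := 2) (by norm_num)
      have hsum : ∑ m ∈ Finset.range 2, t ^ m / (m.factorial : ℝ) = 1 + t := by
        simp [Finset.sum_range_succ]
      rw [hsum] at hb
      have h2 : Real.exp t - 1 - t ≤ |t| ^ (2:ℕ) * ((3:ℝ) / (2 * 2)) := by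
        have := abs_le.1 hb
        push_cast at this ⊢
        norm_num at this ⊢
        linarith [this.2]
      have hsq : |t| ^ (2:ℕ) * ((3:ℝ) / (2 * 2)) ≤ |t| ^ ((2:ℝ)) := by
        rw [show ((2:ℝ)) = ((2:ℕ):ℝ) by norm_num, Real.rpow_natCast]
        nlinarith [sq_nonneg |t|]
      have h3 : |t| ^ ((2:ℝ)) ≤ |t| ^ η :=
        Real.rpow_le_rpow_of_exponent_ge (abs_pos.2 ht0) habs hη2.le
      calc Real.exp t - 1 - t ≤ |t| ^ (2:ℕ) * ((3:ℝ) / (2 * 2)) := h2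
      _ ≤ |t| ^ ((2:ℝ)) := hsq
      _ ≤ |t| ^ η := h3
      _ ≤ 2 * |t| ^ η := by linarith
  · have he : Real.exp t ≤ 1 := Real.exp_le_one_iff.2 (by linarith)
    have h1 : Real.exp t - 1 - t ≤ |t| := by
      rw [abs_of_neg (by linarith)]; linarith
    have habs1 : (1:ℝ) ≤ |t| := by rw [abs_of_neg (by linarith)]; linarith
    have h3 : |t| ^ ((1:ℝ)) ≤ |t| ^ η :=
      Real.rpow_le_rpow_of_exponent_le habs1 hη1.le
    rw [Real.rpow_one] at h3
    linarith

/-- Truncated exponential moment bound, case `1 < η < 2`: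
`E[(e^{θY} - 1 - θY) 1(Y ≤ 1/θ)] ≤ θ^η E[|Y|^η] (1/(2-η) + 1/(η-1) + e)`. -/
theorem stmt3 {Ω : Type*} [MeasurableSpace Ω] (P : Measure Ω) [IsProbabilityMeasure P]
    (Y : Ω → ℝ) (hY : Measurable Y) (η : ℝ) (hη1 : 1 < η) (hη2 : η < 2)
    (hmom : Integrable (fun ω => |Y ω| ^ η) P) (θ : ℝ) (hθ : 0 < θ) :
    ∫ ω, (if Y ω ≤ 1 / θ then Real.exp (θ * Y ω) - 1 - θ * Y ω else 0) ∂P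
      ≤ θ ^ η * (∫ ω, |Y ω| ^ η ∂P) * (1 / (2 - η) + 1 / (η - 1) + Real.exp 1) := by
  set C : ℝ := 1 / (2 - η) + 1 / (η - 1) + Real.exp 1 with hC
  have hC2 : (2:ℝ) ≤ C := by
    have h1 : (1:ℝ) ≤ 1 / (2 - η) := by
      rw [le_div_iff₀ (by linarith)]; linarith
    have h2 : (1:ℝ) ≤ 1 / (η - 1) := by
      rw [le_div_iff₀ (by linarith)]; linarith
    have h3 : (0:ℝ) ≤ Real.exp 1 := (Real.exp_pos 1).le
    simp only [hC]; linarith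
  set f : Ω → ℝ := fun ω => if Y ω ≤ 1 / θ then Real.exp (θ * Y ω) - 1 - θ * Y ω else 0 with hf
  set g : Ω → ℝ := fun ω => C * θ ^ η * |Y ω| ^ η with hg
  have hθη : (0:ℝ) ≤ θ ^ η := Real.rpow_nonneg hθ.le η
  have hpt : ∀ ω, f ω ≤ g ω := by
    intro ω
    have hgnn : 0 ≤ g ω := by
      have := Real.rpow_nonneg (abs_nonneg (Y ω)) η
      simp only [hg]
      positivity
    simp only [hf]
    split_ifs with hcond
    · have ht : θ * Y ω ≤ 1 := by
        calc θ * Y ω ≤ θ * (1/θ) := by exact mul_le_mul_of_nonneg_left hcond hθ.le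
        _ = 1 := by field_simp
      have hk := key_pointwise η hη1 hη2 (θ * Y ω) ht
      have habs : |θ * Y ω| ^ η = θ ^ η * |Y ω| ^ η := by
        rw [abs_mul, abs_of_pos hθ, Real.mul_rpow hθ.le (abs_nonneg _)]
      rw [habs] at hk
      have hmul : 2 * (θ ^ η * |Y ω| ^ η) ≤ C * (θ ^ η * |Y ω| ^ η) := by
        apply mul_le_mul_of_nonneg_right hC2
        positivity
      simp only [hg]; linarith [hmul]
    · exact hgnn
  have hfnn : ∀ ω, 0 ≤ f ω := by
    intro ω
    simp only [hf]
    split_ifs with hcond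
    · linarith [Real.add_one_le_exp (θ * Y ω)]
    · exact le_refl 0
  have hgint : Integrable g P := (hmom.const_mul (C * θ ^ η))
  have hfmeas : Measurable f := by
    apply Measurable.ite (measurableSet_le hY measurable_const)
    · exact ((Real.measurable_exp.comp (hY.const_mul θ)).sub measurable_const).sub (hY.const_mul θ)
    · exact measurable_const
  have hfint : Integrable f P := by
    apply hgint.mono hfmeas.aestronglyMeasurable
    filter_upwards with ω
    rw [Real.norm_eq_abs, Real.norm_eq_abs, abs_of_nonneg (hfnn ω),
      abs_of_nonneg (le_trans (hfnn ω) (hpt ω))]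
    exact hpt ω
  have hint : ∫ ω, f ω ∂P ≤ ∫ ω, g ω ∂P := integral_mono hfint hgint hpt
  have hgeq : ∫ ω, g ω ∂P = C * θ ^ η * ∫ ω, |Y ω| ^ η ∂P := by
    simp only [hg]
    rw [integral_const_mul]
  rw [hgeq] at hint
  have heq : θ ^ η * (∫ ω, |Y ω| ^ η ∂P) * C = C * θ ^ η * ∫ ω, |Y ω| ^ η ∂P := by ring
  rw [heq]
  exact hint
end

section
/- Let $\eta > 0$, $\theta > 0$, and $v > 0$ with $\theta v \ge 1$. Then $\theta \int_{1/\theta}^{v} e^{\theta t} t^{-\eta}\, dt \leq \theta^{\eta} e^{\theta v/2} + 2^{\eta} e^{\theta v} v^{-\eta}$. -/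
open scoped ENNReal

open Real intervalIntegral in
private lemma aux_int (η θ : ℝ) (hη : 0 < η) (hθ : 0 < θ) {a b : ℝ} (ha : 0 < a)
    (hab : a ≤ b) :
    IntervalIntegrable (fun t => Real.exp (θ * t) * t ^ (-η)) MeasureTheory.volume a b := by
  apply ContinuousOn.intervalIntegrable
  rw [Set.uIcc_of_le hab]
  apply ContinuousOn.mul ((Real.continuous_exp.comp (continuous_const.mul continuous_id)).continuousOn)
  apply ContinuousOn.rpow_const continuousOn_id
  intro t ht
  exact Or.inl (ne_of_gt (lt_of_lt_of_le ha ht.1))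

open Real intervalIntegral in
private lemma aux (η θ : ℝ) (hη : 0 < η) (hθ : 0 < θ) {a b : ℝ} (ha : 0 < a)
    (hab : a ≤ b) :
    θ * ∫ t in a..b, Real.exp (θ * t) * t ^ (-η) ≤ a ^ (-η) * Real.exp (θ * b) := by
  have hint := aux_int η θ hη hθ ha hab
  have hint2 : IntervalIntegrable (fun t => a ^ (-η) * Real.exp (θ * t))
      MeasureTheory.volume a b :=
    (continuous_const.mul (Real.continuous_exp.comp
      (continuous_const.mul continuous_id))).intervalIntegrable a b
  have hmono : (∫ t in a..b, Real.exp (θ * t) * t ^ (-η))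
      ≤ ∫ t in a..b, a ^ (-η) * Real.exp (θ * t) := by
    apply intervalIntegral.integral_mono_on hab hint hint2
    intro t ht
    rw [mul_comm (a ^ (-η))]
    apply mul_le_mul_of_nonneg_left _ (Real.exp_pos _).le
    exact Real.rpow_le_rpow_of_nonpos ha ht.1 (neg_nonpos.mpr hη.le)
  have hcalc : (∫ t in a..b, a ^ (-η) * Real.exp (θ * t))
      = a ^ (-η) * ((Real.exp (θ * b) - Real.exp (θ * a)) / θ) := by
    rw [intervalIntegral.integral_const_mul]
    congr 1
    have := intervalIntegral.integral_comp_mul_left (fun x => Real.exp x) (c := θ) (a := a) (b := b)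
    simp only [integral_exp] at this
    rw [this hθ.ne', smul_eq_mul, inv_mul_eq_div]
  have h1 : θ * ∫ t in a..b, Real.exp (θ * t) * t ^ (-η)
      ≤ θ * (a ^ (-η) * ((Real.exp (θ * b) - Real.exp (θ * a)) / θ)) := by
    rw [← hcalc]; exact mul_le_mul_of_nonneg_left hmono hθ.le
  refine h1.trans ?_
  rw [mul_comm θ, mul_assoc, div_mul_cancel₀ _ hθ.ne']
  have : Real.exp (θ * b) - Real.exp (θ * a) ≤ Real.exp (θ * b) := by
    have := (Real.exp_pos (θ * a)).le; linarith
  exact mul_le_mul_of_nonneg_left this (Real.rpow_nonneg ha.le _)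

/-- Deterministic integral inequality: for `η, θ, v > 0` with `θ v ≥ 1`,
`θ ∫_{1/θ}^{v} e^{θt} t^{-η} dt ≤ θ^η e^{θv/2} + 2^η e^{θv} v^{-η}`. -/
theorem stmt4 (η θ v : ℝ) (hη : 0 < η) (hθ : 0 < θ) (hv : 0 < v) (hθv : 1 ≤ θ * v) :
    θ * ∫ t in (1 / θ)..v, Real.exp (θ * t) * t ^ (-η)
      ≤ θ ^ η * Real.exp (θ * v / 2) + (2 : ℝ) ^ η * Real.exp (θ * v) * v ^ (-η) := by
  have hθinv : (0 : ℝ) < 1 / θ := by positivity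
  have hle : 1 / θ ≤ v := by rw [div_le_iff₀ hθ]; linarith [mul_comm θ v]
  have hθη : ((1 : ℝ) / θ) ^ (-η) = θ ^ η := by
    rw [one_div, Real.inv_rpow hθ.le, ← Real.rpow_neg hθ.le, neg_neg]
  have hvη : ((v : ℝ) / 2) ^ (-η) = 2 ^ η * v ^ (-η) := by
    rw [Real.div_rpow hv.le (by norm_num), Real.rpow_neg (by norm_num : (0:ℝ) ≤ 2),
      div_eq_mul_inv, inv_inv]
    ring
  rcases le_or_gt (1 / θ) (v / 2) with hc | hc
  · have hsplit : (∫ t in (1 / θ)..v, Real.exp (θ * t) * t ^ (-η))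
        = (∫ t in (1 / θ)..(v / 2), Real.exp (θ * t) * t ^ (-η))
          + ∫ t in (v / 2)..v, Real.exp (θ * t) * t ^ (-η) := by
      rw [intervalIntegral.integral_add_adjacent_intervals
        (aux_int η θ hη hθ hθinv hc) (aux_int η θ hη hθ (by positivity) (by linarith))]
    rw [hsplit, mul_add]
    have h1 := aux η θ hη hθ hθinv hc
    have h2 := aux η θ hη hθ (show (0:ℝ) < v / 2 by positivity) (show v / 2 ≤ v by linarith)
    rw [hθη] at h1
    rw [hvη] at h2
    have : θ * (v / 2) = θ * v / 2 := by ring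
    rw [this] at h1
    apply add_le_add (h1.trans_eq rfl)
    calc θ * ∫ t in (v / 2)..v, Real.exp (θ * t) * t ^ (-η)
        ≤ 2 ^ η * v ^ (-η) * Real.exp (θ * v) := h2
      _ = 2 ^ η * Real.exp (θ * v) * v ^ (-η) := by ring
  · have h := aux η θ hη hθ hθinv hle
    have hmono : ((1:ℝ) / θ) ^ (-η) ≤ (v / 2) ^ (-η) :=
      Real.rpow_le_rpow_of_nonpos (by positivity) hc.le (neg_nonpos.mpr hη.le)
    have h2 : θ * ∫ t in (1 / θ)..v, Real.exp (θ * t) * t ^ (-η)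
        ≤ 2 ^ η * Real.exp (θ * v) * v ^ (-η) := by
      refine h.trans ?_
      rw [show (2:ℝ) ^ η * Real.exp (θ * v) * v ^ (-η)
        = (2 ^ η * v ^ (-η)) * Real.exp (θ * v) by ring, ← hvη]
      exact mul_le_mul_of_nonneg_right hmono (Real.exp_pos _).le
    have : (0:ℝ) ≤ θ ^ η * Real.exp (θ * v / 2) := by positivity
    linarith
end

section
/- Let $Y$ be a nonnegative-tail random variable with $E[|Y|^{\eta}] < \infty$ for some $\eta > 0$, let $\theta > 0$ and $v \ge 1/\theta$. Then $e\, P(Y > 1/\theta) + \theta \int_{1/\theta}^{v} e^{\theta t} P(Y > t)\, dt \leq K_2\, e^{\theta v} v^{-\eta} E[|Y|^{\eta}]$, where $K_2 = \sup_{t \geq 1} \left( e t^{\eta} e^{-t} + t^{\eta} e^{-t/2} + 2^{\eta} \right) < \infty$. -/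
open MeasureTheory ProbabilityTheory Filter
open scoped ENNReal

lemma aux_mul_exp_le (c t : ℝ) (hc : 0 < c) : t * Real.exp (-(c * t)) ≤ 1 / c := by
  rw [le_div_iff₀ hc]
  have h1 : c * t ≤ Real.exp (c * t) := by
    have := Real.add_one_le_exp (c * t); linarith
  calc t * Real.exp (-(c * t)) * c = (c * t) * Real.exp (-(c * t)) := by ring
    _ ≤ Real.exp (c * t) * Real.exp (-(c * t)) :=
        mul_le_mul_of_nonneg_right h1 (Real.exp_pos _).le
    _ = 1 := by rw [← Real.exp_add]; simp

lemma aux_rpow_exp (η : ℝ) (hη : 0 < η) (t : ℝ) (ht : 0 ≤ t) :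
    t ^ η * Real.exp (-t / 2) ≤ (2 * η) ^ η := by
  have hc : 0 < 1 / (2 * η) := by positivity
  have h1 : t * Real.exp (-(1 / (2 * η) * t)) ≤ 2 * η := by
    have := aux_mul_exp_le (1 / (2 * η)) t hc
    rwa [one_div_one_div] at this
  have h2 : (t * Real.exp (-(1 / (2 * η) * t))) ^ η ≤ (2 * η) ^ η :=
    Real.rpow_le_rpow (by positivity) h1 hη.le
  calc t ^ η * Real.exp (-t / 2)
      = (t * Real.exp (-(1 / (2 * η) * t))) ^ η := by
        rw [Real.mul_rpow ht (Real.exp_pos _).le, ← Real.exp_mul]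
        congr 2
        field_simp
    _ ≤ (2 * η) ^ η := h2

/-- Tail integral bound:
`e P(Y > 1/θ) + θ ∫_{1/θ}^v e^{θt} P(Y > t) dt ≤ K₂ e^{θv} v^{-η} E[|Y|^η]`,
where `K₂ = sup_{t ≥ 1} (e t^η e^{-t} + t^η e^{-t/2} + 2^η)`, a finite constant. -/
theorem stmt5 {Ω : Type*} [MeasurableSpace Ω] (P : Measure Ω) [IsProbabilityMeasure P]
    (Y : Ω → ℝ) (hY : Measurable Y) (η : ℝ) (hη : 0 < η)
    (hmom : Integrable (fun ω => |Y ω| ^ η) P)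
    (θ v : ℝ) (hθ : 0 < θ) (hv : 1 / θ ≤ v)
    (K₂ : ℝ)
    (hK₂ : K₂ = sSup {y : ℝ | ∃ t : ℝ, 1 ≤ t ∧
      y = Real.exp 1 * t ^ η * Real.exp (-t) + t ^ η * Real.exp (-t / 2) + (2 : ℝ) ^ η}) :
    BddAbove {y : ℝ | ∃ t : ℝ, 1 ≤ t ∧
        y = Real.exp 1 * t ^ η * Real.exp (-t) + t ^ η * Real.exp (-t / 2) + (2 : ℝ) ^ η} ∧
    Real.exp 1 * (P {ω | 1 / θ < Y ω}).toReal
        + θ * ∫ t in (1 / θ)..v, Real.exp (θ * t) * (P {ω | t < Y ω}).toReal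
      ≤ K₂ * Real.exp (θ * v) * v ^ (-η) * ∫ ω, |Y ω| ^ η ∂P := by
  have hbdd : BddAbove {y : ℝ | ∃ t : ℝ, 1 ≤ t ∧
      y = Real.exp 1 * t ^ η * Real.exp (-t) + t ^ η * Real.exp (-t / 2) + (2 : ℝ) ^ η} := by
    refine ⟨Real.exp 1 * (2 * η) ^ η + (2 * η) ^ η + 2 ^ η, ?_⟩
    rintro y ⟨t, ht, rfl⟩
    have ht0 : (0:ℝ) ≤ t := by linarith
    have h2 : t ^ η * Real.exp (-t / 2) ≤ (2 * η) ^ η := aux_rpow_exp η hη t ht0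
    have h1 : t ^ η * Real.exp (-t) ≤ t ^ η * Real.exp (-t / 2) :=
      mul_le_mul_of_nonneg_left (Real.exp_le_exp.mpr (by linarith)) (Real.rpow_nonneg ht0 _)
    have h3 : Real.exp 1 * t ^ η * Real.exp (-t) ≤ Real.exp 1 * (2 * η) ^ η := by
      rw [mul_assoc]
      exact mul_le_mul_of_nonneg_left (h1.trans h2) (Real.exp_pos _).le
    linarith
  refine ⟨hbdd, ?_⟩
  -- setup
  have ha0 : (0:ℝ) < 1 / θ := by positivity
  have hv0 : (0:ℝ) < v := lt_of_lt_of_le ha0 hv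
  set a : ℝ := 1 / θ with ha
  set M : ℝ := ∫ ω, |Y ω| ^ η ∂P with hMdef
  have hM0 : 0 ≤ M := integral_nonneg fun ω => Real.rpow_nonneg (abs_nonneg _) _
  set f : ℝ → ℝ := fun t => (P {ω | t < Y ω}).toReal with hfdef
  have hanti : Antitone f := by
    intro s t hst
    exact ENNReal.toReal_mono (measure_ne_top _ _)
      (measure_mono fun ω hω => lt_of_le_of_lt hst hω)
  have hf0 : ∀ t, 0 ≤ f t := fun t => ENNReal.toReal_nonneg
  -- Markov
  have markov : ∀ t : ℝ, 0 < t → f t ≤ t ^ (-η) * M := by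
    intro t ht
    have key : t ^ η * f t ≤ M := by
      have h1 : t ^ η * (P {ω | t ^ η ≤ |Y ω| ^ η}).toReal ≤ M :=
        mul_meas_ge_le_integral_of_nonneg
          (ae_of_all _ fun ω => Real.rpow_nonneg (abs_nonneg _) _) hmom _
      refine le_trans ?_ h1
      refine mul_le_mul_of_nonneg_left ?_ (Real.rpow_nonneg ht.le _)
      refine ENNReal.toReal_mono (measure_ne_top _ _) (measure_mono fun ω hω => ?_)
      simp only [Set.mem_setOf_eq] at *
      exact Real.rpow_le_rpow ht.le (le_trans hω.le (le_abs_self _)) hη.le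
    have htη : (0:ℝ) < t ^ η := Real.rpow_pos_of_pos ht _
    rw [Real.rpow_neg ht.le]
    calc f t = (t ^ η)⁻¹ * (t ^ η * f t) := by field_simp
      _ ≤ (t ^ η)⁻¹ * M := mul_le_mul_of_nonneg_left key (by positivity)
  have haη : a ^ (-η) = θ ^ η := by
    rw [ha, one_div, Real.inv_rpow hθ.le, Real.rpow_neg hθ.le, inv_inv]
  set m : ℝ := max a (v / 2) with hm
  have ham : a ≤ m := le_max_left _ _
  have hmv : m ≤ v := max_le hv (by linarith)
  have hm0 : 0 < m := lt_of_lt_of_le ha0 ham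
  -- integrability
  have hcont : Continuous fun t : ℝ => Real.exp (θ * t) :=
    Real.continuous_exp.comp (continuous_const.mul continuous_id)
  have hI : ∀ b c : ℝ, IntervalIntegrable (fun t => Real.exp (θ * t) * f t) volume b c :=
    fun b c => (hanti.intervalIntegrable).continuousOn_mul hcont.continuousOn
  have hIC : ∀ (b c C : ℝ),
      IntervalIntegrable (fun t => Real.exp (θ * t) * C) volume b c :=
    fun b c C => (hcont.mul continuous_const).intervalIntegrable _ _
  -- exp integral formula
  have hexp : ∀ b c : ℝ, ∫ t in b..c, Real.exp (θ * t)
      = (Real.exp (θ * c) - Real.exp (θ * b)) / θ := by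
    intro b c
    have hD : ∀ x : ℝ, HasDerivAt (fun t => Real.exp (θ * t) / θ) (Real.exp (θ * x)) x := by
      intro x
      have h1 : HasDerivAt (fun t : ℝ => θ * t) θ x := by
        simpa using (hasDerivAt_id x).const_mul θ
      have h2 := (Real.hasDerivAt_exp (θ * x)).comp x h1
      have h3 := h2.div_const θ
      rw [mul_div_cancel_right₀ _ hθ.ne'] at h3
      exact h3
    rw [intervalIntegral.integral_eq_sub_of_hasDerivAt (fun x _ => hD x)
      (hcont.intervalIntegrable _ _)]
    ring
  -- bound the integral over [a, m]
  have hb1 : ∫ t in a..m, Real.exp (θ * t) * f t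
      ≤ (Real.exp (θ * m) - Real.exp (θ * a)) / θ * (θ ^ η * M) := by
    have hmono : ∀ t ∈ Set.Icc a m, Real.exp (θ * t) * f t
        ≤ Real.exp (θ * t) * (θ ^ η * M) := by
      intro t ⟨hat, _⟩
      have ht0 : 0 < t := lt_of_lt_of_le ha0 hat
      refine mul_le_mul_of_nonneg_left ?_ (Real.exp_pos _).le
      calc f t ≤ t ^ (-η) * M := markov t ht0
        _ ≤ a ^ (-η) * M :=
            mul_le_mul_of_nonneg_right
              (Real.rpow_le_rpow_of_nonpos ha0 hat (neg_nonpos.mpr hη.le)) hM0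
        _ = θ ^ η * M := by rw [haη]
    calc ∫ t in a..m, Real.exp (θ * t) * f t
        ≤ ∫ t in a..m, Real.exp (θ * t) * (θ ^ η * M) :=
          intervalIntegral.integral_mono_on ham (hI a m) (hIC a m _) hmono
      _ = (Real.exp (θ * m) - Real.exp (θ * a)) / θ * (θ ^ η * M) := by
          rw [intervalIntegral.integral_mul_const, hexp]
  -- bound the integral over [m, v]
  have hb2 : ∫ t in m..v, Real.exp (θ * t) * f t
      ≤ (Real.exp (θ * v) - Real.exp (θ * m)) / θ * (2 ^ η * v ^ (-η) * M) := by
    have hv2 : (v / 2 : ℝ) ^ (-η) = 2 ^ η * v ^ (-η) := by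
      rw [div_eq_mul_inv, Real.mul_rpow hv0.le (by norm_num),
        Real.inv_rpow (by norm_num : (0:ℝ) ≤ 2), Real.rpow_neg (by norm_num : (0:ℝ) ≤ 2),
        inv_inv]
      ring
    have hmono : ∀ t ∈ Set.Icc m v, Real.exp (θ * t) * f t
        ≤ Real.exp (θ * t) * (2 ^ η * v ^ (-η) * M) := by
      intro t ⟨hmt, _⟩
      have ht0 : 0 < t := lt_of_lt_of_le hm0 hmt
      have hv2t : v / 2 ≤ t := le_trans (le_max_right a (v / 2)) hmt
      refine mul_le_mul_of_nonneg_left ?_ (Real.exp_pos _).le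
      calc f t ≤ t ^ (-η) * M := markov t ht0
        _ ≤ (v / 2) ^ (-η) * M :=
            mul_le_mul_of_nonneg_right
              (Real.rpow_le_rpow_of_nonpos (by linarith) hv2t (neg_nonpos.mpr hη.le)) hM0
        _ = 2 ^ η * v ^ (-η) * M := by rw [hv2]
    calc ∫ t in m..v, Real.exp (θ * t) * f t
        ≤ ∫ t in m..v, Real.exp (θ * t) * (2 ^ η * v ^ (-η) * M) :=
          intervalIntegral.integral_mono_on hmv (hI m v) (hIC m v _) hmono
      _ = (Real.exp (θ * v) - Real.exp (θ * m)) / θ * (2 ^ η * v ^ (-η) * M) := by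
          rw [intervalIntegral.integral_mul_const, hexp]
  -- split
  have hsplit : ∫ t in a..v, Real.exp (θ * t) * f t
      = (∫ t in a..m, Real.exp (θ * t) * f t) + ∫ t in m..v, Real.exp (θ * t) * f t :=
    (intervalIntegral.integral_add_adjacent_intervals (hI a m) (hI m v)).symm
  -- exp(θ m) bounds
  have hθa : θ * a = 1 := by rw [ha]; field_simp
  have hem : Real.exp (θ * m) - Real.exp (θ * a) ≤ Real.exp (θ * v / 2) := by
    have hmax : Real.exp (θ * m) = max (Real.exp (θ * a)) (Real.exp (θ * (v / 2))) := by
      rw [hm, mul_max_of_nonneg _ _ hθ.le]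
      exact Monotone.map_max Real.exp_monotone
    rw [hmax]
    rcases max_cases (Real.exp (θ * a)) (Real.exp (θ * (v / 2))) with ⟨h, _⟩ | ⟨h, _⟩ <;>
      rw [h]
    · have : (0:ℝ) < Real.exp (θ * v / 2) := Real.exp_pos _
      linarith
    · have h1 : θ * (v / 2) = θ * v / 2 := by ring
      have : (0:ℝ) < Real.exp (θ * a) := Real.exp_pos _
      rw [h1]; linarith
  have hev : Real.exp (θ * v) - Real.exp (θ * m) ≤ Real.exp (θ * v) := by
    have : (0:ℝ) < Real.exp (θ * m) := Real.exp_pos _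
    linarith
  -- term 1
  have ht1 : Real.exp 1 * f a ≤ Real.exp 1 * (θ ^ η * M) :=
    mul_le_mul_of_nonneg_left ((markov a ha0).trans_eq (by rw [haη])) (Real.exp_pos _).le
  -- assemble
  have hmain : Real.exp 1 * f a + θ * ∫ t in a..v, Real.exp (θ * t) * f t
      ≤ Real.exp 1 * (θ ^ η * M) + θ ^ η * M * Real.exp (θ * v / 2)
        + 2 ^ η * v ^ (-η) * M * Real.exp (θ * v) := by
    rw [hsplit]
    have e1 : θ * ((Real.exp (θ * m) - Real.exp (θ * a)) / θ * (θ ^ η * M))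
        = (Real.exp (θ * m) - Real.exp (θ * a)) * (θ ^ η * M) := by
      field_simp
    have e2 : θ * ((Real.exp (θ * v) - Real.exp (θ * m)) / θ * (2 ^ η * v ^ (-η) * M))
        = (Real.exp (θ * v) - Real.exp (θ * m)) * (2 ^ η * v ^ (-η) * M) := by
      field_simp
    have p1 : 0 ≤ θ ^ η * M := by positivity
    have p2 : (0:ℝ) ≤ 2 ^ η * v ^ (-η) * M := by positivity
    have b1 := mul_le_mul_of_nonneg_left hb1 hθ.le
    have b2 := mul_le_mul_of_nonneg_left hb2 hθ.le
    rw [e1] at b1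
    rw [e2] at b2
    have c1 : (Real.exp (θ * m) - Real.exp (θ * a)) * (θ ^ η * M)
        ≤ Real.exp (θ * v / 2) * (θ ^ η * M) := mul_le_mul_of_nonneg_right hem p1
    have c2 : (Real.exp (θ * v) - Real.exp (θ * m)) * (2 ^ η * v ^ (-η) * M)
        ≤ Real.exp (θ * v) * (2 ^ η * v ^ (-η) * M) := mul_le_mul_of_nonneg_right hev p2
    nlinarith [ht1]
  -- K₂ bound
  have hθv1 : (1:ℝ) ≤ θ * v := by
    have := mul_le_mul_of_nonneg_left hv hθ.le
    rwa [hθa] at this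
  have hK : Real.exp 1 * (θ * v) ^ η * Real.exp (-(θ * v)) + (θ * v) ^ η
      * Real.exp (-(θ * v) / 2) + (2:ℝ) ^ η ≤ K₂ := by
    rw [hK₂]
    exact le_csSup hbdd ⟨θ * v, hθv1, rfl⟩
  -- algebraic identity
  have hkey : Real.exp 1 * (θ ^ η * M) + θ ^ η * M * Real.exp (θ * v / 2)
        + 2 ^ η * v ^ (-η) * M * Real.exp (θ * v)
      = (Real.exp 1 * (θ * v) ^ η * Real.exp (-(θ * v)) + (θ * v) ^ η
          * Real.exp (-(θ * v) / 2) + (2:ℝ) ^ η) * Real.exp (θ * v) * v ^ (-η) * M := by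
    rw [Real.mul_rpow hθ.le hv0.le]
    have h1 : v ^ η * v ^ (-η) = 1 := by
      rw [← Real.rpow_add hv0]; simp
    have h2 : Real.exp (-(θ * v)) * Real.exp (θ * v) = 1 := by
      rw [← Real.exp_add]; simp
    have h3 : Real.exp (-(θ * v) / 2) * Real.exp (θ * v) = Real.exp (θ * v / 2) := by
      rw [← Real.exp_add]; ring_nf
    calc Real.exp 1 * (θ ^ η * M) + θ ^ η * M * Real.exp (θ * v / 2)
          + 2 ^ η * v ^ (-η) * M * Real.exp (θ * v)
        = Real.exp 1 * θ ^ η * (v ^ η * v ^ (-η)) * (Real.exp (-(θ * v)) * Real.exp (θ * v)) * M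
          + θ ^ η * (v ^ η * v ^ (-η)) * (Real.exp (-(θ * v) / 2) * Real.exp (θ * v)) * M
          + 2 ^ η * v ^ (-η) * M * Real.exp (θ * v) := by
          rw [h1, h2, h3]; ring
      _ = (Real.exp 1 * (θ ^ η * v ^ η) * Real.exp (-(θ * v)) + θ ^ η * v ^ η
          * Real.exp (-(θ * v) / 2) + (2:ℝ) ^ η) * Real.exp (θ * v) * v ^ (-η) * M := by
          ring
  -- finish
  have hpos : (0:ℝ) ≤ Real.exp (θ * v) * v ^ (-η) * M := by positivity
  calc Real.exp 1 * f a + θ * ∫ t in a..v, Real.exp (θ * t) * f t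
      ≤ (Real.exp 1 * (θ * v) ^ η * Real.exp (-(θ * v)) + (θ * v) ^ η
          * Real.exp (-(θ * v) / 2) + (2:ℝ) ^ η) * Real.exp (θ * v) * v ^ (-η) * M :=
        hmain.trans_eq hkey
    _ ≤ K₂ * Real.exp (θ * v) * v ^ (-η) * M := by
        have := mul_le_mul_of_nonneg_right hK hpos
        calc _ = (Real.exp 1 * (θ * v) ^ η * Real.exp (-(θ * v)) + (θ * v) ^ η
              * Real.exp (-(θ * v) / 2) + (2:ℝ) ^ η) * (Real.exp (θ * v) * v ^ (-η) * M) := by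
              ring
          _ ≤ K₂ * (Real.exp (θ * v) * v ^ (-η) * M) := this
          _ = K₂ * Real.exp (θ * v) * v ^ (-η) * M := by ring
end

section
/- Suppose $\overline{F} \in IR$ with Matuszewska indices $0 < \alpha_f \le \beta_f < \infty$, and let $C \ge 0$ be a random variable with $E[C^{\alpha_f - \epsilon}] < \infty$ and $E[C^{\beta_f + \epsilon}] < \infty$ for some $0 < \epsilon < \alpha_f$. Then there is a constant $K$ and $x_0$ such that for all $x \ge x_0$, $E\left[\frac{\overline{F}(x/C)}{\overline{F}(x)}\right] \leq K\, E\left[C^{\alpha_f-\epsilon} \vee C^{\beta_f+\epsilon}\right]$, where $\overline{F}(x/C) := 0$ on $\{C = 0\}$. -/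
open MeasureTheory ProbabilityTheory Filter
open scoped ENNReal

/-- The right tail distribution of a real random variable. -/
noncomputable def rtail {Ω : Type*} [MeasurableSpace Ω] (P : Measure Ω) (X : Ω → ℝ)
    (x : ℝ) : ℝ := (P {ω | x < X ω}).toReal

/-- Intermediate regular variation: `lim_{δ↓0} limsup_{x→∞} F̄((1-δ)x)/F̄(x) = 1`. -/
def IsIR (F : ℝ → ℝ) : Prop :=
  Tendsto (fun δ : ℝ => Filter.limsup (fun x : ℝ => F ((1 - δ) * x) / F x) atTop)
    (nhdsWithin 0 (Set.Ioi 0)) (nhds 1)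

lemma ev_lt_of_lt_liminf' {u : ℝ → ℝ} {a : ℝ} (h : a < Filter.liminf u atTop)
    (hne : Filter.liminf u atTop ≠ 0) : ∀ᶠ x in atTop, a < u x := by
  rcases em (IsBoundedUnder (· ≥ ·) atTop u) with hc | hc
  · exact eventually_lt_of_lt_liminf h hc
  · exfalso; apply hne
    rw [liminf, limsInf]
    convert Real.sSup_empty
    case e'_2 => exact rfl
    rw [Set.eq_empty_iff_forall_notMem]
    intro b hb
    exact hc ⟨b, hb⟩

lemma ev_lt_of_limsup_lt' {u : ℝ → ℝ} {a : ℝ} (h : Filter.limsup u atTop < a)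
    (hne : Filter.limsup u atTop ≠ 0) : ∀ᶠ x in atTop, u x < a := by
  rcases em (IsBoundedUnder (· ≤ ·) atTop u) with hc | hc
  · exact eventually_lt_of_limsup_lt h hc
  · exfalso; apply hne
    rw [limsup, limsSup]
    convert Real.sInf_empty
    case e'_2 => exact rfl
    rw [Set.eq_empty_iff_forall_notMem]
    intro b hb
    exact hc ⟨b, hb⟩

set_option maxHeartbeats 1000000 in
/-- For `F̄ ∈ IR` with Matuszewska indices `0 < α_f ≤ β_f < ∞` and a nonnegative random
variable `C` with `E[C^{α_f-ε}], E[C^{β_f+ε}] < ∞`: there are `K` and `x₀` with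
`E[F̄(x/C)/F̄(x)] ≤ K E[C^{α_f-ε} ∨ C^{β_f+ε}]` for all `x ≥ x₀`
(convention `F̄(x/C) = 0` on `{C = 0}`). -/
theorem stmt13 {Ω : Type*} [MeasurableSpace Ω] (P : Measure Ω) [IsProbabilityMeasure P]
    (X : Ω → ℝ) (hX : Measurable X) (C : Ω → ℝ) (hCmeas : Measurable C)
    (hCnn : ∀ ω, 0 ≤ C ω)
    (α β ε : ℝ) (h0α : 0 < α) (hαβ : α ≤ β) (hε : 0 < ε) (hεα : ε < α)
    (hIR : IsIR (rtail P X))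
    (hα : Tendsto (fun lam : ℝ =>
        (Filter.limsup (fun x : ℝ =>
          (-Real.log (rtail P X (lam * x))) - (-Real.log (rtail P X x))) atTop)
          / Real.log lam) atTop (nhds α))
    (hβ : Tendsto (fun lam : ℝ =>
        (Filter.liminf (fun x : ℝ =>
          (-Real.log (rtail P X (lam * x))) - (-Real.log (rtail P X x))) atTop)
          / Real.log lam) atTop (nhds β))
    (hm1 : ∫⁻ ω, ENNReal.ofReal (C ω ^ (α - ε)) ∂P ≠ ∞)
    (hm2 : ∫⁻ ω, ENNReal.ofReal (C ω ^ (β + ε)) ∂P ≠ ∞) :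
    ∃ K x₀ : ℝ, 0 < K ∧ 0 < x₀ ∧ ∀ x ≥ x₀,
      ∫⁻ ω, (if C ω = 0 then 0
          else ENNReal.ofReal (rtail P X (x / C ω) / rtail P X x)) ∂P
        ≤ ENNReal.ofReal K *
            ∫⁻ ω, ENNReal.ofReal (max (C ω ^ (α - ε)) (C ω ^ (β + ε))) ∂P := by
  set G := rtail P X with hGdef
  have hGanti : Antitone G := by
    intro s t hst
    exact ENNReal.toReal_mono (measure_ne_top P _)
      (measure_mono (fun ω hω => lt_of_le_of_lt hst hω))
  have hGnn : ∀ z, 0 ≤ G z := fun z => ENNReal.toReal_nonneg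
  have hGle1 : ∀ z, G z ≤ 1 := by
    intro z
    calc G z ≤ (1 : ℝ≥0∞).toReal :=
          ENNReal.toReal_mono ENNReal.one_ne_top prob_le_one
      _ = 1 := ENNReal.toReal_one
  have hαε : (0:ℝ) < α - ε := by linarith
  have hβε : (0:ℝ) < β + ε := by linarith
  -- extract lam0 from hβ
  obtain ⟨lam0, hlam0, hL0⟩ : ∃ lam : ℝ, 1 < lam ∧ (α - ε) <
      (Filter.liminf (fun x : ℝ =>
          (-Real.log (G (lam * x))) - (-Real.log (G x))) atTop) / Real.log lam := by
    have h1 := hβ.eventually (eventually_gt_nhds (show α - ε < β by linarith))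
    obtain ⟨lam, h2, h3⟩ := (h1.and (eventually_gt_atTop 1)).exists
    exact ⟨lam, h3, h2⟩
  have hlog0 : 0 < Real.log lam0 := Real.log_pos hlam0
  set a : ℝ := (α - ε) * Real.log lam0 with hadef
  clear_value a
  have ha : 0 < a := by rw [hadef]; exact mul_pos hαε hlog0
  have hLa : a < Filter.liminf (fun x : ℝ =>
      (-Real.log (G (lam0 * x))) - (-Real.log (G x))) atTop := by
    rw [hadef]; exact (lt_div_iff₀ hlog0).mp hL0
  have hevA : ∀ᶠ x in atTop, a < (-Real.log (G (lam0 * x))) - (-Real.log (G x)) :=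
    ev_lt_of_lt_liminf' hLa (ha.trans hLa).ne'
  obtain ⟨x1', hx1'⟩ := eventually_atTop.mp hevA
  set x1 : ℝ := max x1' 1 with hx1def
  have hx1ge1 : (1:ℝ) ≤ x1 := le_max_right _ _
  have hstepA : ∀ y, x1 ≤ y → 0 < G (lam0 * y) ∧ G (lam0 * y) ≤ Real.exp (-a) * G y := by
    intro y hy
    have hy1 : (1:ℝ) ≤ y := le_trans hx1ge1 hy
    have hyp : (0:ℝ) < y := lt_of_lt_of_le one_pos hy1
    have hiq := hx1' y (le_trans (le_max_left _ _) hy)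
    have hmono : G (lam0 * y) ≤ G y := hGanti (le_mul_of_one_le_left hyp.le hlam0.le)
    have hu : 0 < G (lam0 * y) := by
      by_contra hu
      push_neg at hu
      have hu0 : G (lam0 * y) = 0 := le_antisymm hu (hGnn _)
      rw [hu0, Real.log_zero] at hiq
      have := Real.log_nonpos (hGnn y) (hGle1 y)
      linarith
    have hv : 0 < G y := lt_of_lt_of_le hu hmono
    refine ⟨hu, ?_⟩
    have hlog : Real.log (G (lam0 * y)) < Real.log (G y) - a := by linarith
    calc G (lam0 * y) = Real.exp (Real.log (G (lam0 * y))) := (Real.exp_log hu).symm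
      _ ≤ Real.exp (Real.log (G y) - a) := Real.exp_le_exp.mpr hlog.le
      _ = Real.exp (-a) * G y := by
          rw [Real.exp_sub, Real.exp_log hv, Real.exp_neg]; ring
  have hGpos : ∀ z, 0 < G z := by
    intro z
    have h1 := (hstepA (max z x1) (le_max_right _ _)).1
    refine lt_of_lt_of_le h1 (hGanti ?_)
    have hpos : (0:ℝ) < max z x1 :=
      lt_of_lt_of_le (lt_of_lt_of_le one_pos hx1ge1) (le_max_right _ _)
    calc z ≤ max z x1 := le_max_left _ _
      _ ≤ lam0 * max z x1 := le_mul_of_one_le_left hpos.le hlam0.le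
  -- extract lam1 from hα
  obtain ⟨lam1, hlam1, hU1, hU2⟩ : ∃ lam : ℝ, 1 < lam ∧
      0 < (Filter.limsup (fun x : ℝ =>
          (-Real.log (G (lam * x))) - (-Real.log (G x))) atTop) / Real.log lam ∧
      (Filter.limsup (fun x : ℝ =>
          (-Real.log (G (lam * x))) - (-Real.log (G x))) atTop) / Real.log lam < β + ε := by
    have h1 := hα.eventually (eventually_gt_nhds h0α)
    have h2 := hα.eventually (eventually_lt_nhds (show α < β + ε by linarith))
    obtain ⟨lam, ⟨ha', hb'⟩, hc'⟩ := ((h1.and h2).and (eventually_gt_atTop 1)).exists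
    exact ⟨lam, hc', ha', hb'⟩
  have hlog1 : 0 < Real.log lam1 := Real.log_pos hlam1
  set b : ℝ := (β + ε) * Real.log lam1 with hbdef
  clear_value b
  have hbpos : 0 < b := by rw [hbdef]; exact mul_pos hβε hlog1
  have hLb : Filter.limsup (fun x : ℝ =>
      (-Real.log (G (lam1 * x))) - (-Real.log (G x))) atTop < b := by
    rw [hbdef]; exact (div_lt_iff₀ hlog1).mp hU2
  have hLbpos : 0 < Filter.limsup (fun x : ℝ =>
      (-Real.log (G (lam1 * x))) - (-Real.log (G x))) atTop := by
    have := (lt_div_iff₀ hlog1).mp hU1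
    simpa using this
  have hevB : ∀ᶠ x in atTop, (-Real.log (G (lam1 * x))) - (-Real.log (G x)) < b :=
    ev_lt_of_limsup_lt' hLb hLbpos.ne'
  obtain ⟨x2', hx2'⟩ := eventually_atTop.mp hevB
  set x2 : ℝ := max x2' 1 with hx2def
  have hx2ge1 : (1:ℝ) ≤ x2 := le_max_right _ _
  have hx2pos : (0:ℝ) < x2 := lt_of_lt_of_le one_pos hx2ge1
  have hstepB : ∀ y, x2 ≤ y → Real.exp (-b) * G y ≤ G (lam1 * y) := by
    intro y hy
    have hiq := hx2' y (le_trans (le_max_left _ _) hy)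
    have hu := hGpos (lam1 * y)
    have hv := hGpos y
    have hlog : Real.log (G y) - b < Real.log (G (lam1 * y)) := by linarith
    calc Real.exp (-b) * G y = Real.exp (Real.log (G y) - b) := by
          rw [Real.exp_sub, Real.exp_log hv, Real.exp_neg]; ring
      _ ≤ Real.exp (Real.log (G (lam1 * y))) := Real.exp_le_exp.mpr hlog.le
      _ = G (lam1 * y) := Real.exp_log hu
  -- chaining
  have hchainA : ∀ y, x1 ≤ y → ∀ n : ℕ, G (lam0 ^ n * y) ≤ Real.exp (-a) ^ n * G y := by
    intro y hy n
    have hyp : (0:ℝ) < y := lt_of_lt_of_le one_pos (le_trans hx1ge1 hy)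
    induction n with
    | zero => simp
    | succ n ih =>
      have hyn : x1 ≤ lam0 ^ n * y :=
        le_trans hy (le_mul_of_one_le_left hyp.le (one_le_pow₀ hlam0.le))
      have h1 := (hstepA _ hyn).2
      have heq : lam0 ^ (n+1) * y = lam0 * (lam0 ^ n * y) := by ring
      rw [heq]
      calc G (lam0 * (lam0 ^ n * y)) ≤ Real.exp (-a) * G (lam0 ^ n * y) := h1
        _ ≤ Real.exp (-a) * (Real.exp (-a) ^ n * G y) :=
            mul_le_mul_of_nonneg_left ih (Real.exp_pos _).le
        _ = Real.exp (-a) ^ (n+1) * G y := by ring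
  have hchainB : ∀ y, x2 ≤ y → ∀ n : ℕ, Real.exp (-b) ^ n * G y ≤ G (lam1 ^ n * y) := by
    intro y hy n
    have hyp : (0:ℝ) < y := lt_of_lt_of_le one_pos (le_trans hx2ge1 hy)
    induction n with
    | zero => simp
    | succ n ih =>
      have hyn : x2 ≤ lam1 ^ n * y :=
        le_trans hy (le_mul_of_one_le_left hyp.le (one_le_pow₀ hlam1.le))
      have h1 := hstepB _ hyn
      have heq : lam1 ^ (n+1) * y = lam1 * (lam1 ^ n * y) := by ring
      rw [heq]
      calc Real.exp (-b) ^ (n+1) * G y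
          = Real.exp (-b) * (Real.exp (-b) ^ n * G y) := by ring
        _ ≤ Real.exp (-b) * G (lam1 ^ n * y) :=
            mul_le_mul_of_nonneg_left ih (Real.exp_pos _).le
        _ ≤ G (lam1 * (lam1 ^ n * y)) := h1
  -- Potter bounds
  have hpotterA : ∀ y, x1 ≤ y → ∀ lam : ℝ, 1 ≤ lam →
      G (lam * y) ≤ Real.exp a * lam ^ (-(α - ε)) * G y := by
    intro y hy lam hlam
    have hlampos : (0:ℝ) < lam := lt_of_lt_of_le one_pos hlam
    have hyp : (0:ℝ) < y := lt_of_lt_of_le one_pos (le_trans hx1ge1 hy)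
    set n : ℕ := ⌊Real.log lam / Real.log lam0⌋₊ with hn
    have hrat : 0 ≤ Real.log lam / Real.log lam0 :=
      div_nonneg (Real.log_nonneg hlam) hlog0.le
    have h1 : (n:ℝ) * Real.log lam0 ≤ Real.log lam := by
      rw [← le_div_iff₀ hlog0]; exact Nat.floor_le hrat
    have h2 : Real.log lam < ((n:ℝ) + 1) * Real.log lam0 := by
      rw [← div_lt_iff₀ hlog0]; exact Nat.lt_floor_add_one _
    have hpow : lam0 ^ n ≤ lam := by
      have e1 : (lam0:ℝ) ^ n = Real.exp ((n:ℝ) * Real.log lam0) := by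
        rw [← Real.log_pow, Real.exp_log (pow_pos (lt_trans one_pos hlam0) n)]
      rw [e1, ← Real.exp_log hlampos]
      exact Real.exp_le_exp.mpr h1
    have hGm : G (lam * y) ≤ G (lam0 ^ n * y) :=
      hGanti (mul_le_mul_of_nonneg_right hpow hyp.le)
    have hch := hchainA y hy n
    have hq : Real.exp (-a) ^ n ≤ Real.exp a * lam ^ (-(α - ε)) := by
      rw [← Real.exp_nat_mul, Real.rpow_def_of_pos hlampos, ← Real.exp_add]
      apply Real.exp_le_exp.mpr
      have key : (α - ε) * Real.log lam ≤ ((n:ℝ) + 1) * a := by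
        rw [hadef]; nlinarith
      linarith
    calc G (lam * y) ≤ Real.exp (-a) ^ n * G y := le_trans hGm hch
      _ ≤ Real.exp a * lam ^ (-(α - ε)) * G y :=
          mul_le_mul_of_nonneg_right hq (hGnn y)
  have hpotterB : ∀ y, x2 ≤ y → ∀ lam : ℝ, 1 ≤ lam →
      Real.exp (-b) * lam ^ (-(β + ε)) * G y ≤ G (lam * y) := by
    intro y hy lam hlam
    have hlampos : (0:ℝ) < lam := lt_of_lt_of_le one_pos hlam
    have hyp : (0:ℝ) < y := lt_of_lt_of_le one_pos (le_trans hx2ge1 hy)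
    set n : ℕ := ⌊Real.log lam / Real.log lam1⌋₊ + 1 with hn
    have hrat : 0 ≤ Real.log lam / Real.log lam1 :=
      div_nonneg (Real.log_nonneg hlam) hlog1.le
    have h2 : Real.log lam < (n:ℝ) * Real.log lam1 := by
      rw [← div_lt_iff₀ hlog1]
      rw [hn]; push_cast
      exact Nat.lt_floor_add_one _
    have h1 : (n:ℝ) * Real.log lam1 ≤ Real.log lam + Real.log lam1 := by
      have := Nat.floor_le hrat
      push_cast
      rw [hn]; push_cast; rw [add_mul, one_mul]
      have : (⌊Real.log lam / Real.log lam1⌋₊ : ℝ) * Real.log lam1 ≤ Real.log lam := by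
        rw [← le_div_iff₀ hlog1]; exact Nat.floor_le hrat
      linarith
    have hpow : lam ≤ lam1 ^ n := by
      have e1 : (lam1:ℝ) ^ n = Real.exp ((n:ℝ) * Real.log lam1) := by
        rw [← Real.log_pow, Real.exp_log (pow_pos (lt_trans one_pos hlam1) n)]
      rw [e1, ← Real.exp_log hlampos]
      exact Real.exp_le_exp.mpr h2.le
    have hGm : G (lam1 ^ n * y) ≤ G (lam * y) :=
      hGanti (mul_le_mul_of_nonneg_right hpow hyp.le)
    have hch := hchainB y hy n
    have hr : Real.exp (-b) * lam ^ (-(β + ε)) ≤ Real.exp (-b) ^ n := by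
      rw [← Real.exp_nat_mul, Real.rpow_def_of_pos hlampos, ← Real.exp_add]
      apply Real.exp_le_exp.mpr
      have key : (n:ℝ) * b ≤ (β + ε) * Real.log lam + b := by
        rw [hbdef]; nlinarith
      linarith
    calc Real.exp (-b) * lam ^ (-(β + ε)) * G y
        ≤ Real.exp (-b) ^ n * G y := mul_le_mul_of_nonneg_right hr (hGnn y)
      _ ≤ G (lam1 ^ n * y) := hch
      _ ≤ G (lam * y) := hGm
  -- assemble
  set x0 : ℝ := max x1 x2 with hx0def
  have hx0pos : (0:ℝ) < x0 := lt_of_lt_of_le one_pos (le_trans hx1ge1 (le_max_left _ _))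
  have hg2 : 0 < (G x2)⁻¹ := inv_pos.mpr (hGpos x2)
  set K : ℝ := Real.exp a + Real.exp b * (1 + (G x2)⁻¹) with hKdef
  have hKe : K = Real.exp a + Real.exp b + Real.exp b * (G x2)⁻¹ := by rw [hKdef]; ring
  have hp1 : 0 < Real.exp b * (G x2)⁻¹ := mul_pos (Real.exp_pos b) hg2
  have hK1 : Real.exp a ≤ K := by rw [hKe]; linarith [Real.exp_pos b]
  have hK2 : Real.exp b ≤ K := by rw [hKe]; linarith [Real.exp_pos a]
  have hK3 : Real.exp b * (G x2)⁻¹ ≤ K := by rw [hKe]; linarith [Real.exp_pos a, Real.exp_pos b]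
  have hKpos : 0 < K := lt_of_lt_of_le (Real.exp_pos a) hK1
  have hpoint : ∀ x, x0 ≤ x → ∀ c : ℝ, 0 < c →
      G (x / c) ≤ K * max (c ^ (α - ε)) (c ^ (β + ε)) * G x := by
    intro x hx c hc
    have hx1le : x1 ≤ x := le_trans (le_max_left _ _) hx
    have hx2le : x2 ≤ x := le_trans (le_max_right _ _) hx
    have hxpos : (0:ℝ) < x := lt_of_lt_of_le hx0pos hx
    have hfinish : ∀ D p : ℝ, 0 ≤ D → D ≤ K →
        c ^ p ≤ max (c ^ (α - ε)) (c ^ (β + ε)) →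
        G (x / c) ≤ D * c ^ p * G x →
        G (x / c) ≤ K * max (c ^ (α - ε)) (c ^ (β + ε)) * G x := by
      intro D p hD hDK hp h
      refine le_trans h (mul_le_mul_of_nonneg_right ?_ (hGnn x))
      exact mul_le_mul hDK hp (Real.rpow_nonneg hc.le p) (le_trans hD hDK)
    rcases le_or_gt c 1 with hc1 | hc1
    · -- c ≤ 1
      have hlam : (1:ℝ) ≤ c⁻¹ := by simpa using one_le_one_div hc hc1
      have h := hpotterA x hx1le c⁻¹ hlam
      rw [inv_mul_eq_div] at h
      have hrw : (c⁻¹ : ℝ) ^ (-(α - ε)) = c ^ (α - ε) := by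
        rw [Real.inv_rpow hc.le, ← Real.rpow_neg hc.le, neg_neg]
      rw [hrw] at h
      exact hfinish (Real.exp a) (α - ε) (Real.exp_pos a).le hK1 (le_max_left _ _) h
    · rcases le_or_gt x2 (x / c) with hxc | hxc
      · -- moderate c
        have h := hpotterB (x / c) hxc c hc1.le
        have heq : c * (x / c) = x := by field_simp
        rw [heq] at h
        set t : ℝ := Real.exp b * c ^ (β + ε) with htdef
        have hst : (Real.exp (-b) * c ^ (-(β + ε))) * t = 1 := by
          rw [htdef]
          rw [Real.rpow_def_of_pos hc, Real.rpow_def_of_pos hc, ← Real.exp_add,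
            ← Real.exp_add, ← Real.exp_add]
          ring_nf
          exact Real.exp_zero
        have htnn : 0 ≤ t := mul_nonneg (Real.exp_pos b).le (Real.rpow_nonneg hc.le _)
        have hfin : G (x / c) ≤ t * G x := by
          calc G (x / c) = t * (Real.exp (-b) * c ^ (-(β + ε)) * G (x / c)) := by
                rw [← mul_assoc, mul_comm t, hst, one_mul]
            _ ≤ t * G x := mul_le_mul_of_nonneg_left h htnn
        refine hfinish (Real.exp b) (β + ε) (Real.exp_pos b).le hK2 (le_max_right _ _) ?_
        calc G (x / c) ≤ t * G x := hfin
          _ = Real.exp b * c ^ (β + ε) * G x := by rw [htdef]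
      · -- large c : x / c < x2
        have hxx2 : (1:ℝ) ≤ x / x2 := (one_le_div hx2pos).mpr hx2le
        have h := hpotterB x2 le_rfl (x / x2) hxx2
        have heq : (x / x2) * x2 = x := div_mul_cancel₀ x (ne_of_gt hx2pos)
        rw [heq] at h
        have hxc2 : x / x2 ≤ c := by
          rw [div_le_iff₀ hx2pos]
          have := (div_lt_iff₀ hc).mp hxc
          linarith
        have hmono2 : c ^ (-(β + ε)) ≤ (x / x2) ^ (-(β + ε)) := by
          rw [Real.rpow_neg hc.le, Real.rpow_neg (by positivity)]
          apply inv_anti₀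
          · exact Real.rpow_pos_of_pos (by positivity) _
          · exact Real.rpow_le_rpow (by positivity) hxc2 hβε.le
        have h' : Real.exp (-b) * c ^ (-(β + ε)) * G x2 ≤ G x := by
          refine le_trans ?_ h
          exact mul_le_mul_of_nonneg_right
            (mul_le_mul_of_nonneg_left hmono2 (Real.exp_pos _).le) (hGnn x2)
        set t : ℝ := Real.exp b * c ^ (β + ε) * (G x2)⁻¹ with htdef
        have hst : (Real.exp (-b) * c ^ (-(β + ε)) * G x2) * t = 1 := by
          have e1 : Real.exp (-b) * Real.exp b = 1 := by rw [← Real.exp_add]; simp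
          have e2 : c ^ (-(β + ε)) * c ^ (β + ε) = 1 := by
            rw [← Real.rpow_add hc]
            rw [show -(β + ε) + (β + ε) = 0 by ring]
            exact Real.rpow_zero c
          have e3 : G x2 * (G x2)⁻¹ = 1 := mul_inv_cancel₀ (ne_of_gt (hGpos x2))
          calc (Real.exp (-b) * c ^ (-(β + ε)) * G x2) * t
              = (Real.exp (-b) * Real.exp b) * (c ^ (-(β + ε)) * c ^ (β + ε))
                  * (G x2 * (G x2)⁻¹) := by rw [htdef]; ring
            _ = 1 := by rw [e1, e2, e3]; ring
        have htnn : 0 ≤ t := by positivity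
        have hfin : G (x / c) ≤ t * G x := by
          calc G (x / c) ≤ 1 := hGle1 _
            _ = t * (Real.exp (-b) * c ^ (-(β + ε)) * G x2) := by
                rw [mul_comm, hst]
            _ ≤ t * G x := mul_le_mul_of_nonneg_left h' htnn
        refine hfinish (Real.exp b * (G x2)⁻¹) (β + ε)
          (by positivity) hK3 (le_max_right _ _) ?_
        calc G (x / c) ≤ t * G x := hfin
          _ = Real.exp b * (G x2)⁻¹ * c ^ (β + ε) * G x := by rw [htdef]; ring
  -- integral step
  refine ⟨K, x0, hKpos, hx0pos, fun x hx => ?_⟩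
  have hpt : ∀ ω, (if C ω = 0 then 0
      else ENNReal.ofReal (G (x / C ω) / G x))
      ≤ ENNReal.ofReal (K * max (C ω ^ (α - ε)) (C ω ^ (β + ε))) := by
    intro ω
    split_ifs with h
    · exact bot_le
    · apply ENNReal.ofReal_le_ofReal
      have hc : 0 < C ω := lt_of_le_of_ne (hCnn ω) (Ne.symm h)
      rw [div_le_iff₀ (hGpos x)]
      exact hpoint x hx (C ω) hc
  calc ∫⁻ ω, (if C ω = 0 then 0
      else ENNReal.ofReal (G (x / C ω) / G x)) ∂P
      ≤ ∫⁻ ω, ENNReal.ofReal (K * max (C ω ^ (α - ε)) (C ω ^ (β + ε))) ∂P :=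
        lintegral_mono hpt
    _ = ∫⁻ ω, ENNReal.ofReal K * ENNReal.ofReal (max (C ω ^ (α - ε)) (C ω ^ (β + ε))) ∂P := by
        simp_rw [ENNReal.ofReal_mul hKpos.le]
    _ = ENNReal.ofReal K * ∫⁻ ω, ENNReal.ofReal (max (C ω ^ (α - ε)) (C ω ^ (β + ε))) ∂P :=
        lintegral_const_mul' _ _ ENNReal.ofReal_ne_top
end
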